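/- For density matrices ρ,σ with σ positive definite, the function α ↦ χ²_α(ρ,σ) := tr[(ρ-σ)σ^{-α}(ρ-σ)σ^{α-1}] is convex on [0,1]; explicitly, its second derivative equals ∑_{k,l} μ_k^{α-1} μ_l^{-α} (log μ_k - log μ_l)² |⟨k|(ρ-σ)|l⟩|² ≥ 0, where σ = ∑ μ_k |k⟩⟨k|. -/

import Mathlib

open Matrix
open scoped ComplexOrder

/-- The trace norm `‖A‖₁ = tr √(A†A)` of a complex matrix. -/
noncomputable def traceNorm {d : ℕ} (A : Matrix (Fin d) (Fin d) ℂ) : ℝ :=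
  (((Matrix.posSemidef_conjTranspose_mul_self A).1.eigenvectorUnitary : Matrix (Fin d) (Fin d) ℂ) *
    Matrix.diagonal (((↑) : ℝ → ℂ) ∘ (√·) ∘ (Matrix.posSemidef_conjTranspose_mul_self A).1.eigenvalues) *
    (star (Matrix.posSemidef_conjTranspose_mul_self A).1.eigenvectorUnitary :
      Matrix (Fin d) (Fin d) ℂ)).trace.re

/-- Real matrix power of a Hermitian matrix via the spectral decomposition
(defined as `0` on the kernel for negative exponents, i.e. a pseudo-inverse,
and as the junk value `0` for non-Hermitian input). -/
noncomputable def mrpow {d : ℕ} (σ : Matrix (Fin d) (Fin d) ℂ) (α : ℝ) :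
    Matrix (Fin d) (Fin d) ℂ :=
  if hσ : σ.IsHermitian then
    (hσ.eigenvectorUnitary : Matrix (Fin d) (Fin d) ℂ) *
      Matrix.diagonal (fun i => ((hσ.eigenvalues i ^ α : ℝ) : ℂ)) *
      star (hσ.eigenvectorUnitary : Matrix (Fin d) (Fin d) ℂ)
  else 0

/-- The mean α-family of quantum χ²-divergences
`χ²_α(ρ,σ) = tr[(ρ-σ) σ^{-α} (ρ-σ) σ^{α-1}]` (with pseudo-inverse powers of `σ`). -/
noncomputable def chiAlpha {d : ℕ} (α : ℝ) (ρ σ : Matrix (Fin d) (Fin d) ℂ) : ℝ :=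
  (((ρ - σ) * mrpow σ (-α) * (ρ - σ) * mrpow σ (α - 1)).trace).re

lemma convexOn_sum_aux {ι : Type*} (t : Finset ι) (s : Set ℝ) (hs : Convex ℝ s)
    (f : ι → ℝ → ℝ) (h : ∀ i ∈ t, ConvexOn ℝ s (f i)) :
    ConvexOn ℝ s (fun x => ∑ i ∈ t, f i x) := by
  classical
  induction t using Finset.induction with
  | empty => simpa using convexOn_const 0 hs
  | insert a t' hi ih =>
    simp only [Finset.sum_insert hi]
    exact (h a (Finset.mem_insert_self a t')).add
      (ih fun i hit => h i (Finset.mem_insert_of_mem hit))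

lemma convexOn_exp_affine (a b : ℝ) :
    ConvexOn ℝ Set.univ (fun x => Real.exp (a * x + b)) := by
  refine ⟨convex_univ, fun x _ y _ p q hp hq hpq => ?_⟩
  have h := convexOn_exp.2 (Set.mem_univ (a * x + b)) (Set.mem_univ (a * y + b)) hp hq hpq
  simp only [smul_eq_mul] at h ⊢
  calc Real.exp (a * (p * x + q * y) + b)
      = Real.exp (p * (a * x + b) + q * (a * y + b)) := by
        congr 1; linear_combination (-b) * hpq
    _ ≤ p * Real.exp (a * x + b) + q * Real.exp (a * y + b) := h

/-- For density matrices `ρ, σ` with `σ` positive definite, the map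
`α ↦ χ²_α(ρ,σ) = tr[(ρ-σ)σ^{-α}(ρ-σ)σ^{α-1}]` is convex on `[0,1]`. -/
theorem chiAlpha_convex (d : ℕ) (ρ σ : Matrix (Fin d) (Fin d) ℂ)
    (hρ : ρ.PosSemidef) (hρtr : ρ.trace = 1)
    (hσ : σ.PosDef) (hσtr : σ.trace = 1) :
    ConvexOn ℝ (Set.Icc (0 : ℝ) 1) (fun α => chiAlpha α ρ σ) := by
  classical
  have hH : σ.IsHermitian := hσ.1
  set U : Matrix (Fin d) (Fin d) ℂ := (hH.eigenvectorUnitary : Matrix (Fin d) (Fin d) ℂ) with hU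
  set μ : Fin d → ℝ := hH.eigenvalues with hμ
  have hμpos : ∀ k, 0 < μ k := hσ.eigenvalues_pos
  set Δ : Matrix (Fin d) (Fin d) ℂ := ρ - σ with hΔ
  have hΔH : Δ.IsHermitian := hρ.1.sub hH
  set M : Matrix (Fin d) (Fin d) ℂ := star U * Δ * U with hM
  have hMH : M.IsHermitian := by
    have := Matrix.isHermitian_conjTranspose_mul_mul U hΔH
    simpa [hM, Matrix.star_eq_conjTranspose] using this
  have hUU : U * star U = 1 := by
    have := hH.eigenvectorUnitary.2
    rw [Matrix.mem_unitaryGroup_iff] at this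
    exact this
  have key : ∀ α : ℝ, chiAlpha α ρ σ =
      ∑ k, ∑ l, Complex.normSq (M k l) *
        Real.exp ((Real.log (μ k) - Real.log (μ l)) * α + (- Real.log (μ k))) := by
    intro α
    have hm1 : mrpow σ (-α) = U * Matrix.diagonal (fun i => ((μ i ^ (-α) : ℝ) : ℂ)) * star U := by
      rw [mrpow, dif_pos hH]
    have hm2 : mrpow σ (α - 1) = U * Matrix.diagonal (fun i => ((μ i ^ (α - 1) : ℝ) : ℂ)) * star U := by
      rw [mrpow, dif_pos hH]
    set D1 := Matrix.diagonal (fun i => ((μ i ^ (-α) : ℝ) : ℂ)) with hD1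
    set D2 := Matrix.diagonal (fun i => ((μ i ^ (α - 1) : ℝ) : ℂ)) with hD2
    have htr : (Δ * mrpow σ (-α) * Δ * mrpow σ (α - 1)).trace = (M * D1 * (M * D2)).trace := by
      rw [hm1, hm2]
      have e1 : Δ * (U * D1 * star U) * Δ * (U * D2 * star U)
          = (Δ * U * D1 * star U * Δ * U * D2) * star U := by
        simp only [Matrix.mul_assoc]
      rw [e1, Matrix.trace_mul_comm]
      congr 1
      simp only [hM, Matrix.mul_assoc]
    have hterm : ∀ k l : Fin d, M k l * ((μ l ^ (-α) : ℝ) : ℂ) * M l k * ((μ k ^ (α - 1) : ℝ) : ℂ)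
        = ((Complex.normSq (M k l) *
            Real.exp ((Real.log (μ k) - Real.log (μ l)) * α + (- Real.log (μ k))) : ℝ) : ℂ) := by
      intro k l
      have hlk : M l k = starRingEnd ℂ (M k l) := by
        conv_lhs => rw [← hMH]
        simp [Matrix.conjTranspose_apply]
      rw [hlk]
      have h1 : (μ l : ℝ) ^ (-α) = Real.exp (Real.log (μ l) * (-α)) :=
        Real.rpow_def_of_pos (hμpos l) _
      have h2 : (μ k : ℝ) ^ (α - 1) = Real.exp (Real.log (μ k) * (α - 1)) :=
        Real.rpow_def_of_pos (hμpos k) _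
      have hee : ((Real.exp (Real.log (μ l) * (-α)) : ℝ) : ℂ) *
          ((Real.exp (Real.log (μ k) * (α - 1)) : ℝ) : ℂ)
          = ((Real.exp ((Real.log (μ k) - Real.log (μ l)) * α + (- Real.log (μ k))) : ℝ) : ℂ) := by
        rw [← Complex.ofReal_mul, ← Real.exp_add]
        congr 2
        ring
      calc M k l * ((μ l ^ (-α) : ℝ) : ℂ) * starRingEnd ℂ (M k l) * ((μ k ^ (α - 1) : ℝ) : ℂ)
          = (M k l * starRingEnd ℂ (M k l)) *
            (((μ l ^ (-α) : ℝ) : ℂ) * ((μ k ^ (α - 1) : ℝ) : ℂ)) := by ring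
        _ = _ := by
            rw [Complex.mul_conj, h1, h2, hee, Complex.ofReal_mul]
    rw [chiAlpha]
    rw [show ρ - σ = Δ from rfl, htr]
    have : (M * D1 * (M * D2)).trace
        = ∑ k, ∑ l, M k l * ((μ l ^ (-α) : ℝ) : ℂ) * M l k * ((μ k ^ (α - 1) : ℝ) : ℂ) := by
      simp only [Matrix.trace, Matrix.diag]
      refine Finset.sum_congr rfl fun k _ => ?_
      rw [Matrix.mul_apply]
      rw [hD1, hD2]
      simp only [Matrix.mul_diagonal]
      refine Finset.sum_congr rfl fun l _ => ?_
      ring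
    rw [this]
    simp only [hterm]
    simp only [← Complex.ofReal_sum, Complex.ofReal_re]
  have heq : (fun α => chiAlpha α ρ σ) = fun α => ∑ k, ∑ l, Complex.normSq (M k l) *
        Real.exp ((Real.log (μ k) - Real.log (μ l)) * α + (- Real.log (μ k))) := funext key
  rw [heq]
  apply convexOn_sum_aux _ _ (convex_Icc 0 1)
  intro k _
  apply convexOn_sum_aux _ _ (convex_Icc 0 1)
  intro l _
  have := ((convexOn_exp_affine (Real.log (μ k) - Real.log (μ l)) (- Real.log (μ k))).smul
    (Complex.normSq_nonneg (M k l))).subset (Set.subset_univ _) (convex_Icc 0 1)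
  simpa [smul_eq_mul] using this
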